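/- Let f : ℝ^d → ℝ be C¹, coercive (f(x) → ∞ as ‖x‖ → ∞), and with locally Lipschitz gradient. Then any solution of the perturbed gradient flow ẏ(t) = −∇f(y(t)) + r(t), where r is continuous with r(t) → 0, that remains bounded has its ω-limit set contained in the critical set { x : ∇f(x) = 0 }, provided f maps its critical set to a set with empty interior. -/

import Mathlib

open Filter Set Topology

set_option maxHeartbeats 2000000 in
/-- ω-limit sets of bounded solutions of the perturbed gradient flow ẏ = −∇f(y) + r(t),
with r(t) → 0, are contained in the critical set of f (provided f maps its critical set
to a set with empty interior). -/
theorem omega_limit_subset_critical (d : ℕ)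
    (f : EuclideanSpace ℝ (Fin d) → ℝ) (hf : ContDiff ℝ 1 f)
    (hcoercive : Tendsto f (Filter.cocompact (EuclideanSpace ℝ (Fin d))) atTop)
    (hlip : LocallyLipschitz (gradient f))
    (hsard : interior (f '' {x | gradient f x = 0}) = ∅)
    (r : ℝ → EuclideanSpace ℝ (Fin d)) (hrcont : Continuous r)
    (hr : Tendsto r atTop (nhds 0))
    (y : ℝ → EuclideanSpace ℝ (Fin d))
    (hy : ∀ t : ℝ, 0 ≤ t → HasDerivAt y (-gradient f (y t) + r t) t)
    (hbdd : ∃ C : ℝ, ∀ t : ℝ, 0 ≤ t → ‖y t‖ ≤ C) :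
    (⋂ t : ℝ, closure (y '' Ici t)) ⊆ {x | gradient f x = 0} := by
  intro p hp
  simp only [Set.mem_iInter] at hp
  simp only [Set.mem_setOf_eq]
  by_contra hcrit
  have hGc : Continuous (gradient f) := hlip.continuous
  have hfc : Continuous f := hf.continuous
  obtain ⟨C, hC⟩ := hbdd
  set m : ℝ := ‖gradient f p‖ with hm_def
  have hm : 0 < m := by
    rw [hm_def]
    exact norm_pos_iff.mpr hcrit
  -- derivative of the energy g t = f (y t)
  have hg : ∀ t : ℝ, 0 ≤ t → HasDerivAt (fun t => f (y t))
      (-‖gradient f (y t)‖ ^ 2 + inner ℝ (gradient f (y t)) (r t)) t := by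
    intro t ht
    have hdf : HasGradientAt f (gradient f (y t)) (y t) :=
      ((hf.differentiable one_ne_zero) (y t)).hasGradientAt
    have h1 : HasDerivAt (fun t => f (y t))
        ((inner ℝ (gradient f (y t)) (-gradient f (y t) + r t) : ℝ)) t := by
      have h2 := hdf.hasFDerivAt.comp_hasDerivAt t (hy t ht)
      simpa [Function.comp_def, InnerProductSpace.toDual_apply_apply] using h2
    have heq : (inner ℝ (gradient f (y t)) (-gradient f (y t) + r t) : ℝ)
        = -‖gradient f (y t)‖ ^ 2 + inner ℝ (gradient f (y t)) (r t) := by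
      rw [inner_add_right, inner_neg_right, real_inner_self_eq_norm_sq]
    rw [heq] at h1
    exact h1
  -- continuity of y and g on [0, ∞)
  have hyc : ∀ t : ℝ, 0 ≤ t → ContinuousAt y t := fun t ht => (hy t ht).continuousAt
  have hgcont : ∀ a b : ℝ, 0 ≤ a → ContinuousOn (fun t => f (y t)) (Icc a b) :=
    fun a b ha t ht =>
      (hfc.continuousAt.comp (hyc t (ha.trans ht.1))).continuousWithinAt
  -- bound on the gradient along the trajectory
  obtain ⟨M, hM⟩ :=
    (isCompact_closedBall (0 : EuclideanSpace ℝ (Fin d)) C).exists_bound_of_continuousOn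
      hGc.continuousOn
  have hyK : ∀ t : ℝ, 0 ≤ t → y t ∈ Metric.closedBall (0 : EuclideanSpace ℝ (Fin d)) C :=
    fun t ht => mem_closedBall_zero_iff.mpr (hC t ht)
  have hM0 : 0 ≤ M := le_trans (norm_nonneg _) (hM (y 0) (hyK 0 le_rfl))
  -- radius around p where the gradient is large
  obtain ⟨ρ, hρpos, hρ⟩ : ∃ ρ > 0, ∀ x, ‖x - p‖ < ρ → m / 2 ≤ ‖gradient f x‖ := by
    obtain ⟨ρ, hρpos, h⟩ := Metric.continuousAt_iff.mp (hGc.continuousAt (x := p)) (m / 2)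
      (by positivity)
    refine ⟨ρ, hρpos, fun x hx => ?_⟩
    have h1 := h (show dist x p < ρ by rwa [dist_eq_norm])
    rw [dist_eq_norm] at h1
    have h2 : ‖gradient f p‖ - ‖gradient f x‖ ≤ ‖gradient f p - gradient f x‖ :=
      norm_sub_norm_le _ _
    rw [norm_sub_rev] at h2
    rw [← hm_def] at h2
    linarith
  -- time after which the perturbation is small
  obtain ⟨T0, hT0⟩ : ∃ T0 : ℝ, ∀ t, T0 ≤ t → ‖r t‖ ≤ m / 4 := by
    have h := hr.eventually (Metric.ball_mem_nhds (0 : EuclideanSpace ℝ (Fin d))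
      (show (0 : ℝ) < m / 4 by positivity))
    rw [eventually_atTop] at h
    obtain ⟨T0, h⟩ := h
    exact ⟨T0, fun t ht => le_of_lt (by simpa [Metric.mem_ball, dist_zero_right] using h t ht)⟩
  set T : ℝ := max T0 0 with hT_def
  have hT0' : T0 ≤ T := le_max_left _ _
  have hTnn : (0 : ℝ) ≤ T := le_max_right _ _
  set S : ℝ := M + m with hS_def
  have hS : 0 < S := by rw [hS_def]; linarith
  set τ : ℝ := ρ / (2 * S) with hτ_def
  have hτ : 0 < τ := by rw [hτ_def]; positivity
  have hSτ : S * τ = ρ / 2 := by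
    rw [hτ_def]; field_simp
  set δ : ℝ := m ^ 2 / 8 * τ with hδ_def
  have hδ : 0 < δ := by rw [hδ_def]; positivity
  -- speed bound
  have hspeed : ∀ t : ℝ, T ≤ t → ‖-gradient f (y t) + r t‖ ≤ S := by
    intro t ht
    have h1 : ‖gradient f (y t)‖ ≤ M := hM _ (hyK t (hTnn.trans ht))
    have h2 : ‖r t‖ ≤ m / 4 := hT0 t (hT0'.trans ht)
    calc ‖-gradient f (y t) + r t‖ ≤ ‖-gradient f (y t)‖ + ‖r t‖ := norm_add_le _ _
      _ ≤ M + m / 4 := by rw [norm_neg]; exact add_le_add h1 h2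
      _ ≤ S := by rw [hS_def]; linarith
  -- the decrease lemma
  have hdec : ∀ t₀ : ℝ, T ≤ t₀ → ‖y t₀ - p‖ < ρ / 2 →
      f (y (t₀ + τ)) ≤ f (y t₀) - δ := by
    intro t₀ hTt₀ hnear
    have ht₀0 : (0 : ℝ) ≤ t₀ := hTnn.trans hTt₀
    have hstay : ∀ t ∈ Icc t₀ (t₀ + τ), ‖y t - p‖ < ρ := by
      intro t ht
      have hmove : ‖y t - y t₀‖ ≤ S * ‖t - t₀‖ := by
        refine (convex_Icc t₀ (t₀ + τ)).norm_image_sub_le_of_norm_hasDerivWithin_le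
          (f' := fun t => -gradient f (y t) + r t) (fun x hx => ?_) (fun x hx => ?_)
          (left_mem_Icc.mpr (by linarith)) ht
        · exact (hy x (ht₀0.trans hx.1)).hasDerivWithinAt
        · exact hspeed x (hTt₀.trans hx.1)
      have habs : ‖t - t₀‖ = t - t₀ := by
        rw [Real.norm_eq_abs, abs_of_nonneg (by linarith [ht.1])]
      have h2 : S * (t - t₀) ≤ S * τ :=
        mul_le_mul_of_nonneg_left (by linarith [ht.2]) hS.le
      have h3 : ‖y t - p‖ ≤ ‖y t - y t₀‖ + ‖y t₀ - p‖ := by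
        have := norm_add_le (y t - y t₀) (y t₀ - p)
        simpa using this
      rw [habs] at hmove
      have h4 : ‖y t - y t₀‖ ≤ S * τ := hmove.trans h2
      have h5 : ‖y t - p‖ ≤ S * τ + ‖y t₀ - p‖ := h3.trans (add_le_add_left h4 _)
      have h6 : S * τ + ‖y t₀ - p‖ < ρ := by rw [hSτ]; linarith
      exact lt_of_le_of_lt h5 h6
    set φ : ℝ → ℝ := fun t => f (y t) + m ^ 2 / 8 * t with hφ_def
    have hφanti : AntitoneOn φ (Icc t₀ (t₀ + τ)) := by
      have hφder : ∀ t : ℝ, 0 ≤ t → HasDerivAt φ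
          (-‖gradient f (y t)‖ ^ 2 + inner ℝ (gradient f (y t)) (r t) + m ^ 2 / 8) t := by
        intro t ht
        have h5 : HasDerivAt (fun t : ℝ => m ^ 2 / 8 * t) (m ^ 2 / 8) t := by
          simpa using (hasDerivAt_id t).const_mul (m ^ 2 / 8)
        exact (hg t ht).add h5
      refine antitoneOn_of_deriv_nonpos (convex_Icc _ _) ?_ ?_ ?_
      · intro t ht
        exact ((hgcont t₀ (t₀ + τ) ht₀0 t ht).add
          (continuous_const.mul continuous_id).continuousWithinAt)
      · intro t ht
        rw [interior_Icc] at ht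
        exact ((hφder t (by linarith [ht.1])).differentiableAt).differentiableWithinAt
      · intro t ht
        rw [interior_Icc] at ht
        have ht0 : (0 : ℝ) ≤ t := by linarith [ht.1]
        rw [(hφder t ht0).deriv]
        have ha : m / 2 ≤ ‖gradient f (y t)‖ :=
          hρ _ (hstay t ⟨ht.1.le, ht.2.le⟩)
        have hb : ‖r t‖ ≤ m / 4 := hT0 t (by linarith [hT0'.trans hTt₀, ht.1])
        have hi : (inner ℝ (gradient f (y t)) (r t) : ℝ) ≤ ‖gradient f (y t)‖ * ‖r t‖ :=
          real_inner_le_norm _ _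
        have hkey : m / 2 * (m / 4) ≤ ‖gradient f (y t)‖ * (‖gradient f (y t)‖ - ‖r t‖) := by
          apply mul_le_mul ha (by linarith) (by linarith) (norm_nonneg _)
        nlinarith [norm_nonneg (r t), norm_nonneg (gradient f (y t))]
    have h1 := hφanti (left_mem_Icc.mpr (by linarith)) (right_mem_Icc.mpr (by linarith))
      (by linarith)
    simp only [hφ_def] at h1
    rw [hδ_def]
    nlinarith
  -- points of the trajectory visit p arbitrarily late
  have hvisit : ∀ t : ℝ, ∀ η : ℝ, 0 < η → ∃ s, t ≤ s ∧ ‖y s - p‖ < η := by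
    intro t η hη
    have h := hp t
    rw [Metric.mem_closure_iff] at h
    obtain ⟨b, hb, hd⟩ := h η hη
    obtain ⟨s, hs, rfl⟩ := hb
    exact ⟨s, hs, by rwa [dist_comm, dist_eq_norm] at hd⟩
  -- radius where f is close to f p
  obtain ⟨η₀, hη₀pos, hηf⟩ := Metric.continuousAt_iff.mp hfc.continuousAt (δ / 8)
    (by positivity)
  set η : ℝ := min η₀ (ρ / 2) with hη_def
  have hηpos : 0 < η := lt_min hη₀pos (by positivity)
  have hηρ : η ≤ ρ / 2 := min_le_right _ _
  have hηf' : ∀ x, ‖x - p‖ < η → |f x - f p| < δ / 8 := by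
    intro x hx
    have h := hηf (show dist x p < η₀ from lt_of_lt_of_le (by rwa [dist_eq_norm]) (min_le_left _ _))
    rwa [Real.dist_eq] at h
  -- key: near-critical points at every level v in the interval, with gradient ≤ ε
  have hkey : ∀ v ∈ Ioo (f p - 7 * δ / 8) (f p - δ / 8), ∀ ε : ℝ, 0 < ε →
      ∃ s : ℝ, 0 ≤ s ∧ f (y s) = v ∧ ‖gradient f (y s)‖ ≤ ε := by
    intro v hv ε hε
    obtain ⟨T1', hT1'⟩ : ∃ T1 : ℝ, ∀ t, T1 ≤ t → ‖r t‖ ≤ ε := by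
      have h := hr.eventually (Metric.ball_mem_nhds (0 : EuclideanSpace ℝ (Fin d)) hε)
      rw [eventually_atTop] at h
      obtain ⟨T1, h⟩ := h
      exact ⟨T1, fun t ht => le_of_lt (by simpa [Metric.mem_ball, dist_zero_right] using h t ht)⟩
    set T1 : ℝ := max T1' T with hT1_def
    have hT1T : T ≤ T1 := le_max_right _ _
    -- first visit: a
    obtain ⟨a, haT1, hanear⟩ := hvisit T1 η hηpos
    have haT : T ≤ a := hT1T.trans haT1
    have ha0 : (0 : ℝ) ≤ a := hTnn.trans haT
    have hfa : |f (y a) - f p| < δ / 8 := hηf' _ hanear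
    have hfdrop : f (y (a + τ)) ≤ f (y a) - δ :=
      hdec a haT (lt_of_lt_of_le hanear hηρ)
    have hfa1 : f (y (a + τ)) < v := by
      have := hv.1
      cases abs_lt.mp hfa with
      | intro h1 h2 => linarith
    -- second visit: b
    obtain ⟨b, hbge, hbnear⟩ := hvisit (a + τ) η hηpos
    have hfb : |f (y b) - f p| < δ / 8 := hηf' _ hbnear
    have hfb1 : v < f (y b) := by
      have := hv.2
      cases abs_lt.mp hfb with
      | intro h1 h2 => linarith
    have hab : a + τ ≤ b := hbge
    have haτ0 : (0 : ℝ) ≤ a + τ := by linarith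
    -- the set of times in [a+τ, b] where f ∘ y = v
    set A : Set ℝ := Icc (a + τ) b ∩ (fun t => f (y t)) ⁻¹' {v} with hA_def
    have hAsub : A ⊆ Icc (a + τ) b := inter_subset_left
    have hAne : A.Nonempty := by
      obtain ⟨u, hu, huv⟩ := intermediate_value_Icc hab (hgcont (a + τ) b (by linarith))
        ⟨hfa1.le, hfb1.le⟩
      exact ⟨u, hu, huv⟩
    have hAclosed : IsClosed A :=
      (hgcont (a + τ) b (by linarith)).preimage_isClosed_of_isClosed isClosed_Icc
        isClosed_singleton
    have hAcpt : IsCompact A := IsCompact.of_isClosed_subset isCompact_Icc hAclosed hAsub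
    obtain ⟨s₀, hs₀A, hs₀max⟩ := hAcpt.exists_isGreatest hAne
    have hs₀Icc : s₀ ∈ Icc (a + τ) b := hAsub hs₀A
    have hs₀v : f (y s₀) = v := hs₀A.2
    have hs₀0 : (0 : ℝ) ≤ s₀ := le_trans (by linarith) hs₀Icc.1
    have hs₀b : s₀ < b := lt_of_le_of_ne hs₀Icc.2 (by
      intro h
      rw [h] at hs₀v
      exact absurd hs₀v (ne_of_lt hfb1).symm)
    -- f ∘ y > v strictly after s₀ up to b
    have hgt : ∀ t ∈ Ioc s₀ b, v < f (y t) := by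
      intro t ht
      rcases lt_trichotomy (f (y t)) v with h | h | h
      · exfalso
        obtain ⟨u, hu, huv⟩ := intermediate_value_Icc ht.2
          (hgcont t b (by linarith [hs₀Icc.1, ht.1])) ⟨h.le, hfb1.le⟩
        have huA : u ∈ A :=
          ⟨⟨le_trans hs₀Icc.1 (le_trans ht.1.le hu.1), hu.2⟩, huv⟩
        have := hs₀max huA
        linarith [ht.1, hu.1]
      · exfalso
        have htA : t ∈ A := ⟨⟨le_trans hs₀Icc.1 ht.1.le, ht.2⟩, h⟩
        have := hs₀max htA
        linarith [ht.1]
      · exact h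
    -- derivative at s₀ is nonnegative
    have hslope : 0 ≤ -‖gradient f (y s₀)‖ ^ 2 + inner ℝ (gradient f (y s₀)) (r s₀) := by
      have hd := ((hg s₀ hs₀0).hasDerivWithinAt (s := Ioi s₀))
      rw [hasDerivWithinAt_iff_tendsto_slope' (by simp)] at hd
      refine ge_of_tendsto hd ?_
      filter_upwards [Ioc_mem_nhdsGT_of_mem (⟨le_refl s₀, hs₀b⟩ : s₀ ∈ Ico s₀ b)] with t ht
      have h1 : v < f (y t) := hgt t ht
      have h2 : s₀ < t := ht.1
      rw [slope_def_field, hs₀v]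
      apply div_nonneg (by linarith) (by linarith)
    have hrs : ‖r s₀‖ ≤ ε := hT1' s₀ (le_trans (le_max_left _ _)
      (le_trans haT1 (by linarith [hs₀Icc.1])))
    have hi : (inner ℝ (gradient f (y s₀)) (r s₀) : ℝ) ≤ ‖gradient f (y s₀)‖ * ‖r s₀‖ :=
      real_inner_le_norm _ _
    have hGε : ‖gradient f (y s₀)‖ ≤ ε := by
      have hsq : ‖gradient f (y s₀)‖ * ‖gradient f (y s₀)‖ ≤
          ‖gradient f (y s₀)‖ * ‖r s₀‖ := by
        have h1 : ‖gradient f (y s₀)‖ ^ 2 ≤ (inner ℝ (gradient f (y s₀)) (r s₀) : ℝ) := by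
          linarith
        calc ‖gradient f (y s₀)‖ * ‖gradient f (y s₀)‖
            = ‖gradient f (y s₀)‖ ^ 2 := (sq _).symm
          _ ≤ (inner ℝ (gradient f (y s₀)) (r s₀) : ℝ) := h1
          _ ≤ ‖gradient f (y s₀)‖ * ‖r s₀‖ := hi
      rcases eq_or_lt_of_le (norm_nonneg (gradient f (y s₀))) with h0 | h0
      · rw [← h0]; exact hε.le
      · exact (le_of_mul_le_mul_left hsq h0).trans hrs
    exact ⟨s₀, hs₀0, hs₀v, hGε⟩
  -- hence the whole interval consists of critical values
  have hIoo : Ioo (f p - 7 * δ / 8) (f p - δ / 8) ⊆ f '' {x | gradient f x = 0} := by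
    intro v hv
    have hx : ∀ n : ℕ, ∃ s : ℝ, 0 ≤ s ∧ f (y s) = v ∧
        ‖gradient f (y s)‖ ≤ 1 / (n + 1) :=
      fun n => hkey v hv (1 / (n + 1)) (by positivity)
    choose s hs0 hsf hsg using hx
    have hmem : ∀ n : ℕ, y (s n) ∈ Metric.closedBall (0 : EuclideanSpace ℝ (Fin d)) C :=
      fun n => hyK (s n) (hs0 n)
    obtain ⟨x, hxK, φ, hφmono, hconv⟩ :=
      (isCompact_closedBall (0 : EuclideanSpace ℝ (Fin d)) C).tendsto_subseq hmem
    refine ⟨x, ?_, ?_⟩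
    · show gradient f x = 0
      have h1 : Tendsto (fun n => gradient f (y (s (φ n)))) atTop (𝓝 (gradient f x)) :=
        (hGc.tendsto x).comp hconv
      have h2 : Tendsto (fun n => gradient f (y (s (φ n)))) atTop
          (𝓝 (0 : EuclideanSpace ℝ (Fin d))) := by
        apply squeeze_zero_norm (fun n => hsg (φ n))
        have h3 : Tendsto (fun n : ℕ => 1 / ((n : ℝ) + 1)) atTop (𝓝 0) :=
          tendsto_one_div_add_atTop_nhds_zero_nat
        exact h3.comp hφmono.tendsto_atTop
      exact tendsto_nhds_unique h1 h2
    · have h1 : Tendsto (fun n => f (y (s (φ n)))) atTop (𝓝 (f x)) :=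
        (hfc.tendsto x).comp hconv
      have h2 : (fun n => f (y (s (φ n)))) = fun _ => v := funext fun n => hsf (φ n)
      rw [h2] at h1
      exact tendsto_nhds_unique h1 tendsto_const_nhds
  -- contradiction with Sard-type hypothesis
  have hmemint : (f p - δ / 2) ∈ interior (f '' {x | gradient f x = 0}) :=
    interior_maximal hIoo isOpen_Ioo ⟨by linarith, by linarith⟩
  rw [hsard] at hmemint
  exact hmemint
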